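/- Let z₀ ∈ ℂ with Im z₀ > 0, let u(z) = (z − z₀)/(z − conj(z₀)), let λ ∈ ℂ with |λ| = 1 and λ ≠ 1, and define the Möbius transformation T(z) = (z₀ − conj(z₀)·λ·u(z))/(1 − λ·u(z)) (so that u(T(z)) = λ·u(z)). Then for every integer k ≥ 0 and every z ∈ ℂ with Im z > 0 and z ≠ z₀: (z − conj(z))^{2k} · T′(z)^{k+1} / ((z − T(z))² · (conj(z) − T(z))^{2k}) = (λ^{k+1}/((1 − λ)² · u(z)²)) · ((1 − |u(z)|²)^{2k}/(1 − λ·|u(z)|²)^{2k}) · u′(z)², where T′ and u′ denote complex derivatives, u′(z) = (z₀ − conj(z₀))/(z − conj(z₀))², and all the denominators appearing are nonzero. -/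

import Mathlib

open Complex

private lemma aux_split_L (k : ℕ) (A D E F : ℂ) (hE : E ≠ 0) (hF : F ≠ 0) :
    A ^ (2 * k) * D ^ (k + 1) / (E ^ 2 * F ^ (2 * k)) =
      (A ^ 2 * D / F ^ 2) ^ k * (D / E ^ 2) := by
  field_simp
  ring_nf
  rw [mul_assoc _ (F ^ (k * 2)), ← mul_pow, mul_inv_cancel₀ hF, one_pow, mul_one]

private lemma aux_split_R (k : ℕ) (lv M w P Q d a : ℂ) (hM : M ≠ 0) (hw : w ≠ 0)
    (hQ : Q ≠ 0) (ha : a ≠ 0) :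
    lv ^ (k + 1) / (M ^ 2 * w ^ 2) * (P ^ (2 * k) / Q ^ (2 * k)) * (d / a ^ 2) ^ 2 =
      (lv * P ^ 2 / Q ^ 2) ^ k * (lv / (M ^ 2 * w ^ 2) * (d / a ^ 2) ^ 2) := by
  field_simp
  ring_nf
  rw [mul_assoc _ (Q ^ (k * 2)), ← mul_pow, mul_inv_cancel₀ hQ, one_pow, mul_one]

private lemma aux_base1 (P Q q a b d lv : ℂ) (ha : a ≠ 0) (hb : b ≠ 0) (hd : d ≠ 0)
    (hq : q ≠ 0) (hQ : Q ≠ 0) :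
    (-(P * a * b) / d) ^ 2 * (lv * d ^ 2 / (q ^ 2 * a ^ 2)) / (b * Q / q) ^ 2 =
      lv * P ^ 2 / Q ^ 2 := by
  have hden : d ^ 2 * (q ^ 2 * a ^ 2) * (b * Q) ^ 2 ≠ 0 :=
    mul_ne_zero (mul_ne_zero (pow_ne_zero 2 hd)
      (mul_ne_zero (pow_ne_zero 2 hq) (pow_ne_zero 2 ha)))
      (pow_ne_zero 2 (mul_ne_zero hb hQ))
  rw [div_pow, div_pow, div_mul_div_comm, div_div_div_eq, div_eq_div_iff hden
    (pow_ne_zero 2 hQ)]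
  ring

private lemma aux_base2 (lv M w q a d : ℂ) (hM : M ≠ 0) (hw : w ≠ 0) (hq : q ≠ 0)
    (ha : a ≠ 0) :
    lv * d ^ 2 / (q ^ 2 * a ^ 2) / (a * w * M / q) ^ 2 =
      lv / (M ^ 2 * w ^ 2) * (d / a ^ 2) ^ 2 := by
  field_simp

/-- Let `z₀` be in the upper half-plane, `u(z) = (z − z₀)/(z − conj z₀)`, `l` a unimodular
complex number with `l ≠ 1`, and `T(z) = (z₀ − conj(z₀)·l·u(z))/(1 − l·u(z))` the elliptic
Möbius transformation with `u(T(z)) = l·u(z)`. Then for every integer `k ≥ 0` and every `z`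
in the upper half-plane with `z ≠ z₀`, all denominators below are nonzero and
`(z − conj z)^{2k}·T′(z)^{k+1}/((z − T(z))²·(conj z − T(z))^{2k})
 = (l^{k+1}/((1 − l)²·u(z)²))·((1 − |u(z)|²)^{2k}/(1 − l·|u(z)|²)^{2k})·u′(z)²`,
where `u′(z) = (z₀ − conj z₀)/(z − conj z₀)²`. -/
theorem elliptic_term_disc_coordinate (z₀ : ℂ) (hz₀ : 0 < z₀.im)
    (l : ℂ) (hl : ‖l‖ = 1) (hl1 : l ≠ 1) (k : ℕ) (z : ℂ) (hz : 0 < z.im)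
    (hzz₀ : z ≠ z₀)
    (u T : ℂ → ℂ)
    (hu : u = fun w : ℂ => (w - z₀) / (w - (starRingEnd ℂ) z₀))
    (hT : T = fun w : ℂ => (z₀ - (starRingEnd ℂ) z₀ * (l * u w)) / (1 - l * u w)) :
    z - (starRingEnd ℂ) z₀ ≠ 0 ∧
    1 - l * u z ≠ 0 ∧
    u z ≠ 0 ∧
    z - T z ≠ 0 ∧
    (starRingEnd ℂ) z - T z ≠ 0 ∧
    1 - l * ((‖u z‖ : ℂ)) ^ 2 ≠ 0 ∧
    (z - (starRingEnd ℂ) z) ^ (2 * k) * (deriv T z) ^ (k + 1) /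
        ((z - T z) ^ 2 * ((starRingEnd ℂ) z - T z) ^ (2 * k)) =
      l ^ (k + 1) / ((1 - l) ^ 2 * (u z) ^ 2) *
        ((1 - ((‖u z‖ : ℂ)) ^ 2) ^ (2 * k) /
          (1 - l * ((‖u z‖ : ℂ)) ^ 2) ^ (2 * k)) *
        ((z₀ - (starRingEnd ℂ) z₀) / (z - (starRingEnd ℂ) z₀) ^ 2) ^ 2 := by
  have h1 : z - (starRingEnd ℂ) z₀ ≠ 0 := by
    intro h
    have h2 := congrArg Complex.im h
    simp [Complex.sub_im, Complex.conj_im] at h2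
    linarith
  have hb : (starRingEnd ℂ) z - z₀ ≠ 0 := by
    intro h
    have h2 := congrArg Complex.im h
    simp [Complex.sub_im, Complex.conj_im] at h2
    linarith
  have hd : z₀ - (starRingEnd ℂ) z₀ ≠ 0 := by
    intro h
    have h2 := congrArg Complex.im h
    simp [Complex.sub_im, Complex.conj_im] at h2
    linarith
  have hlt : ‖z - z₀‖ < ‖z - (starRingEnd ℂ) z₀‖ := by
    rw [Complex.norm_def, Complex.norm_def]
    apply Real.sqrt_lt_sqrt (Complex.normSq_nonneg _)
    simp [Complex.normSq_apply, Complex.sub_re, Complex.sub_im, Complex.conj_re, Complex.conj_im]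
    nlinarith
  have habs : ‖u z‖ < 1 := by
    rw [hu]
    simp only [norm_div]
    rw [div_lt_one (norm_pos_iff.mpr h1)]
    exact hlt
  have h3 : u z ≠ 0 := by
    rw [hu]
    exact div_ne_zero (sub_ne_zero.mpr hzz₀) h1
  have h2 : 1 - l * u z ≠ 0 := by
    intro h
    have h' : l * u z = 1 := by linear_combination -h
    have := congrArg norm h'
    rw [norm_mul, hl, one_mul, norm_one] at this
    linarith
  have h6 : 1 - l * ((‖u z‖ : ℂ)) ^ 2 ≠ 0 := by
    intro h
    have h' : l * ((‖u z‖ : ℂ)) ^ 2 = 1 := by linear_combination -h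
    have := congrArg norm h'
    rw [norm_mul, hl, one_mul, norm_one, norm_pow, Complex.norm_real,
        Real.norm_of_nonneg (norm_nonneg _)] at this
    nlinarith [norm_nonneg (u z)]
  have h1l : (1 : ℂ) - l ≠ 0 := sub_ne_zero.mpr (fun h => hl1 h.symm)
  have hA2 : ((‖u z‖ : ℂ)) ^ 2 = u z * (starRingEnd ℂ) (u z) := by
    rw [Complex.mul_conj]
    norm_cast
    exact Complex.sq_norm _
  have hzu : z - z₀ = u z * (z - (starRingEnd ℂ) z₀) := by
    rw [hu]; field_simp
  have hcu : (starRingEnd ℂ) z - (starRingEnd ℂ) z₀ =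
      (starRingEnd ℂ) (u z) * ((starRingEnd ℂ) z - z₀) := by
    have := congrArg (starRingEnd ℂ) hzu
    simpa [map_mul, map_sub] using this
  -- factorization of z - T z
  have e1 : z - T z = (z - (starRingEnd ℂ) z₀) * u z * (1 - l) / (1 - l * u z) := by
    rw [hT]
    simp only
    rw [eq_div_iff h2, sub_mul, div_mul_cancel₀ _ h2]
    linear_combination hzu
  -- factorization of conj z - T z
  have e2 : (starRingEnd ℂ) z - T z =
      ((starRingEnd ℂ) z - z₀) * (1 - l * ((‖u z‖ : ℂ)) ^ 2) / (1 - l * u z) := by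
    rw [hA2, hT]
    simp only
    rw [eq_div_iff h2, sub_mul, div_mul_cancel₀ _ h2]
    linear_combination (-(l * u z)) * hcu
  -- factorization of z - conj z
  have hzcz : z - (starRingEnd ℂ) z =
      -((1 - ((‖u z‖ : ℂ)) ^ 2) * (z - (starRingEnd ℂ) z₀) *
        ((starRingEnd ℂ) z - z₀)) / (z₀ - (starRingEnd ℂ) z₀) := by
    rw [hA2, eq_div_iff hd]
    linear_combination ((starRingEnd ℂ) z - (starRingEnd ℂ) z₀) * hzu +
      u z * (z - (starRingEnd ℂ) z₀) * hcu
  -- derivative of u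
  have hu' : HasDerivAt u ((z₀ - (starRingEnd ℂ) z₀) / (z - (starRingEnd ℂ) z₀) ^ 2) z := by
    have h : HasDerivAt (fun w : ℂ => (w - z₀) / (w - (starRingEnd ℂ) z₀))
        ((1 * (z - (starRingEnd ℂ) z₀) - (z - z₀) * 1) / (z - (starRingEnd ℂ) z₀) ^ 2) z :=
      ((hasDerivAt_id z).sub_const z₀).div ((hasDerivAt_id z).sub_const _) h1
    rw [hu]
    convert h using 1
    congr 1
    ring
  -- derivative of T
  have hTd : HasDerivAt T
      (l * (z₀ - (starRingEnd ℂ) z₀) ^ 2 /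
        ((1 - l * u z) ^ 2 * (z - (starRingEnd ℂ) z₀) ^ 2)) z := by
    have hden : HasDerivAt (fun w => 1 - l * u w)
        (-(l * ((z₀ - (starRingEnd ℂ) z₀) / (z - (starRingEnd ℂ) z₀) ^ 2))) z :=
      (hu'.const_mul l).const_sub 1
    have hnum : HasDerivAt (fun w => z₀ - (starRingEnd ℂ) z₀ * (l * u w))
        (-((starRingEnd ℂ) z₀ * (l * ((z₀ - (starRingEnd ℂ) z₀) / (z - (starRingEnd ℂ) z₀) ^ 2)))) z :=
      ((hu'.const_mul l).const_mul _).const_sub z₀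
    rw [hT]
    refine (hnum.div hden h2).congr_deriv ?_
    field_simp
    ring
  have hT' : deriv T z =
      l * (z₀ - (starRingEnd ℂ) z₀) ^ 2 /
        ((1 - l * u z) ^ 2 * (z - (starRingEnd ℂ) z₀) ^ 2) := hTd.deriv
  have e4 : z - T z ≠ 0 := by
    rw [e1]; exact div_ne_zero (mul_ne_zero (mul_ne_zero h1 h3) h1l) h2
  have e5 : (starRingEnd ℂ) z - T z ≠ 0 := by
    rw [e2]; exact div_ne_zero (mul_ne_zero hb h6) h2
  refine ⟨h1, h2, h3, e4, e5, h6, ?_⟩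
  rw [aux_split_L k (z - (starRingEnd ℂ) z) (deriv T z) (z - T z) ((starRingEnd ℂ) z - T z)
    e4 e5,
    aux_split_R k l (1 - l) (u z) (1 - ((‖u z‖ : ℂ)) ^ 2)
    (1 - l * ((‖u z‖ : ℂ)) ^ 2) (z₀ - (starRingEnd ℂ) z₀)
    (z - (starRingEnd ℂ) z₀) h1l h3 h6 h1]
  congr 1
  · congr 1
    rw [hzcz, hT', e2]
    exact aux_base1 _ _ _ _ _ _ _ h1 hb hd h2 h6
  · rw [hT', e1]
    exact aux_base2 _ _ _ _ _ _ h1l h3 h2 h1
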